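/- Let s_0, s_1, s_2 be the 3-hyperbolic functions. Then the addition formulas hold for all z, w ∈ ℂ: s_0(z+w) = s_0(z)s_0(w) + s_1(z)s_2(w) + s_2(z)s_1(w); s_1(z+w) = s_0(z)s_1(w) + s_1(z)s_0(w) + s_2(z)s_2(w); s_2(z+w) = s_0(z)s_2(w) + s_1(z)s_1(w) + s_2(z)s_0(w). -/
import Mathlib

open Complex Finset

noncomputable def zeta3 : ℂ := Complex.exp (2 * Real.pi * Complex.I / 3)

noncomputable def s3 (k : ℕ) (z : ℂ) : ℂ :=
  (1 / 3) * ∑ m ∈ Finset.range 3, ((zeta3 ^ m)⁻¹) ^ k * Complex.exp (z * zeta3 ^ m)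

lemma zeta3_cube : zeta3 ^ 3 = 1 := by
  rw [zeta3, ← Complex.exp_nat_mul]
  have : ((3 : ℕ) : ℂ) * (2 * Real.pi * Complex.I / 3) = 2 * Real.pi * Complex.I := by
    push_cast; ring
  rw [this, Complex.exp_two_pi_mul_I]

lemma zeta3_ne_zero : zeta3 ≠ 0 := Complex.exp_ne_zero _

lemma zeta3_ne_one : zeta3 ≠ 1 := by
  have him : zeta3.im = Real.sin (2 * Real.pi / 3) := by
    have : (2 * Real.pi * Complex.I / 3) = ((2 * Real.pi / 3 : ℝ) : ℂ) * Complex.I := by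
      push_cast; ring
    rw [zeta3, this, Complex.exp_ofReal_mul_I_im]
  have hpos : 0 < Real.sin (2 * Real.pi / 3) := by
    apply Real.sin_pos_of_pos_of_lt_pi <;> nlinarith [Real.pi_pos]
  intro h
  rw [h] at him
  simp at him
  linarith [him ▸ hpos]

lemma zeta3_sum : zeta3 ^ 2 + zeta3 + 1 = 0 := by
  have h : (zeta3 - 1) * (zeta3 ^ 2 + zeta3 + 1) = 0 := by
    linear_combination zeta3_cube
  rcases mul_eq_zero.mp h with h1 | h2
  · exact absurd (sub_eq_zero.mp h1) zeta3_ne_one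
  · exact h2

lemma zeta3_inv : zeta3⁻¹ = zeta3 ^ 2 :=
  inv_eq_of_mul_eq_one_right (by linear_combination zeta3_cube)

lemma zeta3_sq_inv : (zeta3 ^ 2)⁻¹ = zeta3 :=
  inv_eq_of_mul_eq_one_right (by linear_combination zeta3_cube)

theorem s3_addition_formulas (z w : ℂ) :
    s3 0 (z + w) = s3 0 z * s3 0 w + s3 1 z * s3 2 w + s3 2 z * s3 1 w ∧
    s3 1 (z + w) = s3 0 z * s3 1 w + s3 1 z * s3 0 w + s3 2 z * s3 2 w ∧
    s3 2 (z + w) = s3 0 z * s3 2 w + s3 1 z * s3 1 w + s3 2 z * s3 0 w := by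
  have hsum : zeta3 ^ 2 + zeta3 + 1 = 0 := zeta3_sum
  refine ⟨?_, ?_, ?_⟩ <;>
  · simp only [s3, Finset.sum_range_succ, Finset.sum_range_zero, pow_zero, pow_one,
      inv_one, one_pow, one_mul, mul_one, zero_add, zeta3_inv, zeta3_sq_inv,
      add_mul, Complex.exp_add]
    first
    | linear_combination ((-1/9) * Complex.exp z * Complex.exp (w * zeta3) +
      (1/9) * zeta3 * Complex.exp z * Complex.exp (w * zeta3) +
      (-1/9) * zeta3^2 * Complex.exp z * Complex.exp (w * zeta3) +
      (-1/9) * Complex.exp z * Complex.exp (w * zeta3^2) +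
      (-1/9) * Complex.exp (z * zeta3) * Complex.exp w +
      (1/9) * zeta3 * Complex.exp (z * zeta3) * Complex.exp w +
      (-1/9) * zeta3^2 * Complex.exp (z * zeta3) * Complex.exp w +
      (2/9) * Complex.exp (z * zeta3) * Complex.exp (w * zeta3) +
      (-2/9) * zeta3 * Complex.exp (z * zeta3) * Complex.exp (w * zeta3) +
      (2/9) * zeta3^3 * Complex.exp (z * zeta3) * Complex.exp (w * zeta3) +
      (-2/9) * zeta3^4 * Complex.exp (z * zeta3) * Complex.exp (w * zeta3) +
      (-1/9) * Complex.exp (z * zeta3) * Complex.exp (w * zeta3^2) +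
      (1/9) * zeta3 * Complex.exp (z * zeta3) * Complex.exp (w * zeta3^2) +
      (-1/9) * zeta3^3 * Complex.exp (z * zeta3) * Complex.exp (w * zeta3^2) +
      (-1/9) * Complex.exp (z * zeta3^2) * Complex.exp w +
      (-1/9) * Complex.exp (z * zeta3^2) * Complex.exp (w * zeta3) +
      (1/9) * zeta3 * Complex.exp (z * zeta3^2) * Complex.exp (w * zeta3) +
      (-1/9) * zeta3^3 * Complex.exp (z * zeta3^2) * Complex.exp (w * zeta3) +
      (2/9) * Complex.exp (z * zeta3^2) * Complex.exp (w * zeta3^2) +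
      (-2/9) * zeta3 * Complex.exp (z * zeta3^2) * Complex.exp (w * zeta3^2)) * hsum
    | linear_combination ((-1/9) * Complex.exp z * Complex.exp (w * zeta3) +
      (1/9) * zeta3 * Complex.exp z * Complex.exp (w * zeta3) +
      (-1/9) * zeta3^2 * Complex.exp z * Complex.exp (w * zeta3) +
      (-1/9) * Complex.exp z * Complex.exp (w * zeta3^2) +
      (-1/9) * Complex.exp (z * zeta3) * Complex.exp w +
      (1/9) * zeta3 * Complex.exp (z * zeta3) * Complex.exp w +
      (-1/9) * zeta3^2 * Complex.exp (z * zeta3) * Complex.exp w +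
      (1/9) * zeta3^2 * Complex.exp (z * zeta3) * Complex.exp (w * zeta3) +
      (-1/9) * zeta3^3 * Complex.exp (z * zeta3) * Complex.exp (w * zeta3) +
      (1/9) * zeta3^5 * Complex.exp (z * zeta3) * Complex.exp (w * zeta3) +
      (-1/9) * zeta3^6 * Complex.exp (z * zeta3) * Complex.exp (w * zeta3) +
      (-1/9) * zeta3 * Complex.exp (z * zeta3) * Complex.exp (w * zeta3^2) +
      (1/9) * zeta3^3 * Complex.exp (z * zeta3) * Complex.exp (w * zeta3^2) +
      (-1/9) * zeta3^4 * Complex.exp (z * zeta3) * Complex.exp (w * zeta3^2) +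
      (-1/9) * Complex.exp (z * zeta3^2) * Complex.exp w +
      (-1/9) * zeta3 * Complex.exp (z * zeta3^2) * Complex.exp (w * zeta3) +
      (1/9) * zeta3^3 * Complex.exp (z * zeta3^2) * Complex.exp (w * zeta3) +
      (-1/9) * zeta3^4 * Complex.exp (z * zeta3^2) * Complex.exp (w * zeta3) +
      (1/9) * zeta3 * Complex.exp (z * zeta3^2) * Complex.exp (w * zeta3^2) +
      (-1/9) * zeta3^2 * Complex.exp (z * zeta3^2) * Complex.exp (w * zeta3^2)) * hsum
    | linear_combination ((-1/9) * Complex.exp z * Complex.exp (w * zeta3) +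
      (1/9) * zeta3 * Complex.exp z * Complex.exp (w * zeta3) +
      (-1/9) * zeta3^2 * Complex.exp z * Complex.exp (w * zeta3) +
      (-1/9) * Complex.exp z * Complex.exp (w * zeta3^2) +
      (-1/9) * Complex.exp (z * zeta3) * Complex.exp w +
      (1/9) * zeta3 * Complex.exp (z * zeta3) * Complex.exp w +
      (-1/9) * zeta3^2 * Complex.exp (z * zeta3) * Complex.exp w +
      (-1/9) * zeta3^2 * Complex.exp (z * zeta3) * Complex.exp (w * zeta3^2) +
      (-1/9) * Complex.exp (z * zeta3^2) * Complex.exp w +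
      (-1/9) * zeta3^2 * Complex.exp (z * zeta3^2) * Complex.exp (w * zeta3)) * hsum
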